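/- Suppose σ = θ·ς₁·ω^d(ς₂) with ς₁ς₂ = ς₂ς₁ = τ in S_d, and let a = τ^k · ω^d(τ^ℓ) for integers k, ℓ. Then (σa)² = τ^{k+ℓ+1} · ω^d(τ^{k+ℓ+1}). -/

import Mathlib

/-- The shift of a permutation of `ℕ` up by `d`: fixes `{0,…,d-1}` and acts as `σ`
conjugated by `k ↦ k + d` above. -/
def shift (d : ℕ) (σ : Equiv.Perm ℕ) : Equiv.Perm ℕ where
  toFun k := if k < d then k else σ (k - d) + d
  invFun k := if k < d then k else σ⁻¹ (k - d) + d
  left_inv k := by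
    by_cases h : k < d
    · simp [h]
    · dsimp only
      rw [if_neg h, if_neg (by omega), Nat.add_sub_cancel, Equiv.Perm.inv_eq_iff_eq.mpr rfl]
      omega
  right_inv k := by
    by_cases h : k < d
    · simp [h]
    · dsimp only
      rw [if_neg h, if_neg (by omega), Nat.add_sub_cancel, Equiv.Perm.eq_inv_iff_eq.mp rfl]
      omega

/-- The involution of `ℕ` swapping the blocks `{0,…,d-1}` and `{d,…,2d-1}`. -/
def theta (d : ℕ) : Equiv.Perm ℕ :=
  Function.Involutive.toPerm
    (fun k => if k < d then k + d else if k < 2 * d then k - d else k)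
    (by intro k; dsimp only; split_ifs <;> omega)

-- auxiliary lemmas
lemma shift_apply (d : ℕ) (σ : Equiv.Perm ℕ) (k : ℕ) :
    shift d σ k = if k < d then k else σ (k - d) + d := rfl

lemma theta_apply (d : ℕ) (k : ℕ) :
    theta d k = if k < d then k + d else if k < 2 * d then k - d else k := rfl

lemma theta_sq (d : ℕ) : theta d * theta d = 1 := by
  ext m
  simp only [Equiv.Perm.mul_apply, theta_apply, Equiv.Perm.one_apply]
  split_ifs <;> omega

lemma shift_mul (d : ℕ) (σ τ : Equiv.Perm ℕ) :
    shift d (σ * τ) = shift d σ * shift d τ := by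
  ext m
  simp only [Equiv.Perm.mul_apply, shift_apply]
  by_cases h : m < d
  · simp [h]
  · rw [if_neg h, if_neg h, if_neg (by omega), Nat.add_sub_cancel]

lemma apply_lt_of_fix (d : ℕ) (σ : Equiv.Perm ℕ) (h : ∀ k, d ≤ k → σ k = k)
    {m : ℕ} (hm : m < d) : σ m < d := by
  by_contra hge
  have h2 := σ.injective (h _ (le_of_not_gt hge))
  rw [h2] at hge
  exact hge hm

lemma commute_shift (d : ℕ) (σ τ : Equiv.Perm ℕ) (h : ∀ k, d ≤ k → σ k = k) :
    σ * shift d τ = shift d τ * σ := by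
  ext m
  simp only [Equiv.Perm.mul_apply, shift_apply]
  by_cases hm : m < d
  · rw [if_pos hm, if_pos (apply_lt_of_fix d σ h hm)]
  · rw [if_neg hm, h _ (le_of_not_gt hm), if_neg hm, h _ (by omega)]

lemma theta_mul (d : ℕ) (σ : Equiv.Perm ℕ) (h : ∀ k, d ≤ k → σ k = k) :
    theta d * σ = shift d σ * theta d := by
  ext m
  simp only [Equiv.Perm.mul_apply, shift_apply, theta_apply]
  by_cases hm : m < d
  · have h1 : σ m < d := apply_lt_of_fix d σ h hm
    rw [if_pos hm, if_pos h1, if_neg (show ¬ m + d < d by omega), Nat.add_sub_cancel]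
  · by_cases hm2 : m < 2 * d
    · rw [h _ (le_of_not_gt hm), if_neg hm, if_pos hm2,
        if_pos (show m - d < d by omega)]
    · rw [h _ (le_of_not_gt hm), if_neg hm, if_neg hm2,
        h _ (show d ≤ m - d by omega), if_neg hm]
      omega

/-- If `σ = θ·ς₁·ω^d(ς₂)` with `ς₁ς₂ = ς₂ς₁ = τ`, and `a = τ^k·ω^d(τ^ℓ)` for
integers `k, ℓ`, then `(σa)² = τ^(k+ℓ+1)·ω^d(τ^(k+ℓ+1))`. -/
theorem stmt_5 (d : ℕ) (hd : 2 ≤ d) (ς₁ ς₂ τ : Equiv.Perm ℕ)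
    (h₁ : ∀ k, d ≤ k → ς₁ k = k) (h₂ : ∀ k, d ≤ k → ς₂ k = k)
    (hτ : ς₁ * ς₂ = τ) (hτ' : ς₂ * ς₁ = τ)
    (σ : Equiv.Perm ℕ) (hσ : σ = theta d * ς₁ * shift d ς₂)
    (k ℓ : ℤ) (a : Equiv.Perm ℕ) (ha : a = τ ^ k * shift d (τ ^ ℓ)) :
    (σ * a) * (σ * a) = τ ^ (k + ℓ + 1) * shift d (τ ^ (k + ℓ + 1)) := by
  subst hσ ha
  have hτf : ∀ m, d ≤ m → τ m = m := by
    intro m hm; rw [← hτ, Equiv.Perm.mul_apply, h₂ m hm, h₁ m hm]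
  have hτn : ∀ (n : ℤ) (m : ℕ), d ≤ m → (τ ^ n) m = m := fun n m hm =>
    Equiv.Perm.zpow_apply_eq_self_of_apply_eq_self (hτf m hm) n
  have c1 : Commute ς₁ τ := by
    show ς₁ * τ = τ * ς₁
    conv_lhs => rw [← hτ']
    conv_rhs => rw [← hτ]
    rw [mul_assoc]
  have c2 : Commute ς₂ τ := by
    show ς₂ * τ = τ * ς₂
    conv_lhs => rw [← hτ]
    conv_rhs => rw [← hτ']
    rw [mul_assoc]
  have tmv2 : ∀ (y : Equiv.Perm ℕ), (∀ m, d ≤ m → y m = m) →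
      ∀ x, shift d y * (theta d * x) = theta d * (y * x) := by
    intro y hy x
    rw [← mul_assoc, ← theta_mul d y hy, mul_assoc]
  have tmv : ∀ (y : Equiv.Perm ℕ), (∀ m, d ≤ m → y m = m) →
      ∀ x, y * (theta d * x) = theta d * (shift d y * x) := by
    intro y hy x
    have e2 : y * theta d = theta d * shift d y := by
      calc y * theta d = theta d * theta d * (y * theta d) := by rw [theta_sq, one_mul]
        _ = theta d * (theta d * y * theta d) := by rw [mul_assoc, ← mul_assoc (theta d) y]
        _ = theta d * (shift d y * (theta d * theta d)) := by
            rw [theta_mul d y hy, mul_assoc]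
        _ = theta d * shift d y := by rw [theta_sq, mul_one]
    rw [← mul_assoc, e2, mul_assoc]
  have tsq : ∀ x : Equiv.Perm ℕ, theta d * (theta d * x) = x := by
    intro x; rw [← mul_assoc, theta_sq, one_mul]
  have Cmv : ∀ (y : Equiv.Perm ℕ), (∀ m, d ≤ m → y m = m) →
      ∀ (z x : Equiv.Perm ℕ), shift d z * (y * x) = y * (shift d z * x) := by
    intro y hy z x
    rw [← mul_assoc, ← commute_shift d y z hy, mul_assoc]
  have T1 := tmv ς₁ h₁
  have Tk := tmv (τ ^ k) (hτn k)
  have T2' := tmv2 ς₂ h₂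
  have Tl' := tmv2 (τ ^ ℓ) (hτn ℓ)
  have C1 := Cmv ς₁ h₁
  have C2 := Cmv ς₂ h₂
  have Ck := Cmv (τ ^ k) (hτn k)
  have Cl := Cmv (τ ^ ℓ) (hτn ℓ)
  have hxk : ς₁ * (τ ^ k * (ς₂ * τ ^ ℓ)) = τ ^ (k + ℓ + 1) := by
    rw [← mul_assoc (τ ^ k) ς₂, ← (c2.zpow_right k).eq, mul_assoc, ← mul_assoc, hτ,
      ← zpow_add, ← zpow_one_add]
    congr 1
    ring
  have hyk : ς₂ * (τ ^ ℓ * (ς₁ * τ ^ k)) = τ ^ (k + ℓ + 1) := by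
    rw [← mul_assoc (τ ^ ℓ) ς₁, ← (c1.zpow_right ℓ).eq, mul_assoc, ← mul_assoc, hτ',
      ← zpow_add, ← zpow_one_add]
    congr 1
    ring
  rw [show τ ^ (k + ℓ + 1) * shift d (τ ^ (k + ℓ + 1))
      = ς₂ * (τ ^ ℓ * (ς₁ * τ ^ k)) * shift d (ς₁ * (τ ^ k * (ς₂ * τ ^ ℓ))) by
    rw [hxk, hyk]]
  simp only [shift_mul, mul_assoc, T1, Tk, T2', Tl', tsq, C1, C2, Ck, Cl]
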